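/- If a, b, c are natural numbers with √a + √b = √c (as real numbers) and a, b, c ≥ 1, then there exist positive integers d, p, q with d squarefree (or d = 1) such that a = d·p², b = d·q², and c = d·(p+q)². -/
import Mathlib

theorem sqrt_add_sqrt_eq_sqrt (a b c : ℕ) (ha : 1 ≤ a) (hb : 1 ≤ b) (hc : 1 ≤ c)
    (h : Real.sqrt a + Real.sqrt b = Real.sqrt c) :
    ∃ d p q : ℕ, 0 < d ∧ 0 < p ∧ 0 < q ∧ Squarefree d ∧
      a = d * p ^ 2 ∧ b = d * q ^ 2 ∧ c = d * (p + q) ^ 2 := by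
  -- ab is a perfect square
  have hab : IsSquare (a * b) := by
    by_contra hsq
    have hirr : Irrational (Real.sqrt ((a : ℝ) * b)) := by
      have := irrational_sqrt_natCast_iff.mpr hsq
      rwa [Nat.cast_mul] at this
    have hval : Real.sqrt ((a : ℝ) * b) = ((c : ℝ) - a - b) / 2 := by
      have h2 : (Real.sqrt a + Real.sqrt b) ^ 2 = (c : ℝ) := by
        rw [h, Real.sq_sqrt (by positivity)]
      have hsab : Real.sqrt a * Real.sqrt b = Real.sqrt ((a : ℝ) * b) :=
        (Real.sqrt_mul (by positivity) _).symm
      have ha2 : Real.sqrt a ^ 2 = (a : ℝ) := Real.sq_sqrt (by positivity)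
      have hb2 : Real.sqrt b ^ 2 = (b : ℝ) := Real.sq_sqrt (by positivity)
      nlinarith [hsab, ha2, hb2]
    rw [hval] at hirr
    exact hirr ⟨(((c : ℚ) - a - b) / 2), by push_cast; ring⟩
  obtain ⟨d, p, hd0, hp0, hdp, hdsf⟩ := Nat.sq_mul_squarefree_of_pos ha
  -- a = p^2 * d
  obtain ⟨k, hk⟩ := hab
  -- p^2 * d * b = k * k
  have hkey : p ^ 2 * (d * b) = k ^ 2 := by
    rw [← hdp] at hk; rw [pow_two, pow_two]; linarith [hk]
  have hpk : p ∣ k := by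
    have : p ^ 2 ∣ k ^ 2 := ⟨d * b, hkey.symm⟩
    exact (Nat.pow_dvd_pow_iff two_ne_zero).mp this
  obtain ⟨m, hm⟩ := hpk
  have hdb : d * b = m ^ 2 := by
    have : p ^ 2 * (d * b) = p ^ 2 * m ^ 2 := by rw [hkey, hm]; ring
    exact Nat.eq_of_mul_eq_mul_left (by positivity) this
  have hdm : d ∣ m := by
    refine (hdsf.dvd_pow_iff_dvd two_ne_zero).mp ⟨b, ?_⟩
    rw [← hdb]
  obtain ⟨q, hq⟩ := hdm
  have hbq : b = d * q ^ 2 := by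
    have : d * b = d * (d * q ^ 2) := by rw [hdb, hq]; ring
    exact Nat.eq_of_mul_eq_mul_left hd0 this
  have hq0 : 0 < q := by
    rcases Nat.eq_zero_or_pos q with h0 | h0
    · simp [h0] at hbq; omega
    · exact h0
  refine ⟨d, p, q, hd0, hp0, hq0, hdsf, by rw [← hdp, mul_comm], hbq, ?_⟩
  -- c = d * (p+q)^2
  have hsd : (0:ℝ) ≤ (d:ℝ) := by positivity
  have hsa : Real.sqrt a = p * Real.sqrt d := by
    rw [← hdp]; push_cast
    rw [Real.sqrt_mul (by positivity), Real.sqrt_sq (by positivity)]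
  have hsb : Real.sqrt b = q * Real.sqrt d := by
    rw [hbq]; push_cast
    rw [mul_comm, Real.sqrt_mul (by positivity), Real.sqrt_sq (by positivity)]
  have hcr : (c : ℝ) = d * (p + q) ^ 2 := by
    have h2 : (Real.sqrt a + Real.sqrt b) ^ 2 = (c : ℝ) := by
      rw [h, Real.sq_sqrt (by positivity)]
    rw [hsa, hsb] at h2
    have hd2 : Real.sqrt d ^ 2 = (d : ℝ) := Real.sq_sqrt hsd
    nlinarith [hd2]
  exact_mod_cast hcr
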